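/- Let (X,d) be a complete metric space, let f : X → (−∞,∞] be lower semicontinuous, and let x̄ be a point with f(x̄) finite at which the slope is zero: |∇f|(x̄) = 0. Let M be an identifiable set for f at x̄. Then x̄ is a strict local minimizer of f (meaning f(x) > f(x̄) for all x ≠ x̄ near x̄) if and only if x̄ is a strict local minimizer of f restricted to M (meaning f(x) > f(x̄) for all x ∈ M with x ≠ x̄ near x̄). -/

import Mathlib

open Filter Topology
open scoped ENNReal NNReal

/-- The slope `|∇f|(x)`: the infimum of all `δ > 0` such that `x` is a local minimizer of
`f + δ·d(·,x)`; it equals `∞` at points where `f x = ⊤`. -/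
noncomputable def slopeM {X : Type*} [MetricSpace X] (f : X → EReal) (x : X) : ℝ≥0∞ :=
  if f x = ⊤ then ⊤
  else sInf {δ : ℝ≥0∞ | ∃ c : ℝ, 0 < c ∧ δ = ENNReal.ofReal c ∧
    ∀ᶠ z in 𝓝 x, f x ≤ f z + ((c * dist z x : ℝ) : EReal)}

/-- The modulus of identifiability: `liminf_{x → xbar, x ∉ M, f(x) → f(xbar)} |∇f|(x)`. -/
noncomputable def identModulus {X : Type*} [MetricSpace X] (f : X → EReal) (M : Set X)
    (xbar : X) : ℝ≥0∞ :=
  Filter.liminf (slopeM f) (𝓝[Mᶜ] xbar ⊓ Filter.comap f (𝓝 (f xbar)))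

/-- `M` is an identifiable set for `f` at `xbar`: it is closed, contains `xbar`, and the
modulus of identifiability is strictly positive. -/
def Identifiable {X : Type*} [MetricSpace X] (f : X → EReal) (M : Set X) (xbar : X) : Prop :=
  IsClosed M ∧ xbar ∈ M ∧ 0 < identModulus f M xbar

/-- Ekeland's variational principle for real-valued lower semicontinuous functions. -/
lemma ekelandAux {Y : Type*} [MetricSpace Y] [CompleteSpace Y]
    (g : Y → ℝ) (hg : LowerSemicontinuous g) (B : ℝ) (hB : ∀ x, B ≤ g x)
    (z : Y) (ε σ : ℝ) (hσ : 0 < σ) (hz : ∀ x, g z ≤ g x + ε) :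
    ∃ y, g y ≤ g z ∧ σ * dist y z ≤ ε ∧ ∀ x, g y ≤ g x + σ * dist x y := by
  set F : Y → Set Y := fun w => {u | g u + σ * dist u w ≤ g w} with hF
  have self : ∀ w, w ∈ F w := by intro w; simp [hF]
  have trans : ∀ {u w v}, u ∈ F w → w ∈ F v → u ∈ F v := by
    intro u w v hu hw
    have htri : dist u v ≤ dist u w + dist w v := dist_triangle u w v
    simp only [hF, Set.mem_setOf_eq] at *
    nlinarith [hu, hw]
  have closed : ∀ w, IsClosed (F w) := by
    intro w
    have : LowerSemicontinuous fun u => g u + σ * dist u w :=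
      hg.add ((continuous_const.mul (continuous_id.dist continuous_const)).lowerSemicontinuous)
    exact this.isClosed_preimage (g w)
  have hne : ∀ w, (g '' F w).Nonempty := fun w => ⟨g w, w, self w, rfl⟩
  have hbdd : ∀ w, ∀ a ∈ g '' F w, B ≤ a := by rintro w a ⟨u, _, rfl⟩; exact hB u
  have hnext : ∀ (n : ℕ) (w : Y), ∃ u, u ∈ F w ∧ g u < sInf (g '' F w) + (1/2 : ℝ)^n := by
    intro n w
    obtain ⟨a, ⟨u, hu, rfl⟩, ha⟩ :=
      Real.lt_sInf_add_pos (hne w) (ε := (1/2:ℝ)^n) (pow_pos (by norm_num) n)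
    exact ⟨u, hu, ha⟩
  choose nextf hnext1 hnext2 using hnext
  set y : ℕ → Y := fun n => Nat.rec z (fun n yn => nextf n yn) n with hy
  have hy0 : y 0 = z := rfl
  have hys : ∀ n, y (n+1) = nextf n (y n) := fun n => rfl
  have memsucc : ∀ n, y (n+1) ∈ F (y n) := fun n => hnext1 n (y n)
  have chain : ∀ n m, n ≤ m → y m ∈ F (y n) := by
    intro n m hnm
    induction m with
    | zero => simp at hnm; subst hnm; exact self _
    | succ k ih =>
      rcases Nat.lt_or_ge n (k+1) with h | h
      · exact trans (memsucc k) (ih (Nat.lt_succ_iff.mp h))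
      · have : n = k + 1 := le_antisymm hnm h
        subst this; exact self _
  have key : ∀ n m, n + 1 ≤ m → σ * dist (y m) (y (n+1)) ≤ (1/2 : ℝ)^n := by
    intro n m hnm
    have h1 : g (y m) + σ * dist (y m) (y (n+1)) ≤ g (y (n+1)) := chain (n+1) m hnm
    have h2 : g (y (n+1)) < sInf (g '' F (y n)) + (1/2 : ℝ)^n := by rw [hys]; exact hnext2 n (y n)
    have h3 : sInf (g '' F (y n)) ≤ g (y m) :=
      csInf_le ⟨B, hbdd _⟩ ⟨y m, chain n m (le_trans (Nat.le_succ n) hnm), rfl⟩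
    linarith
  have hcauchy : CauchySeq y := by
    rw [Metric.cauchySeq_iff']
    intro δ hδ
    obtain ⟨n, hn⟩ := exists_pow_lt_of_lt_one (mul_pos hσ hδ) (by norm_num : (1/2 : ℝ) < 1)
    refine ⟨n+1, fun m hm => ?_⟩
    have := key n m hm
    have : σ * dist (y m) (y (n+1)) < σ * δ := lt_of_le_of_lt this hn
    exact lt_of_mul_lt_mul_left this hσ.le
  obtain ⟨w, hw⟩ := cauchySeq_tendsto_of_complete hcauchy
  have wmem : ∀ n, w ∈ F (y n) := by
    intro n
    refine (closed (y n)).mem_of_tendsto hw (eventually_atTop.2 ⟨n, fun m hm => chain n m hm⟩)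
  have hw0 : g w + σ * dist w z ≤ g z := by have := wmem 0; rwa [hy0] at this
  have hgw : g w ≤ g z := by nlinarith [dist_nonneg (x := w) (y := z)]
  refine ⟨w, hgw, by nlinarith [hz w], ?_⟩
  intro x
  by_contra hx
  push_neg at hx
  have hxF : x ∈ F w := le_of_lt hx
  have hxFn : ∀ n, x ∈ F (y n) := fun n => trans hxF (wmem n)
  have hle : ∀ n : ℕ, g w ≤ g x + (1/2 : ℝ)^n := by
    intro n
    have h1 : g w ≤ g (y (n+1)) := by
      have := wmem (n+1); simp only [hF, Set.mem_setOf_eq] at this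
      nlinarith [dist_nonneg (x := w) (y := y (n+1))]
    have h2 : g (y (n+1)) < sInf (g '' F (y n)) + (1/2 : ℝ)^n := by rw [hys]; exact hnext2 n (y n)
    have h3 : sInf (g '' F (y n)) ≤ g x := csInf_le ⟨B, hbdd _⟩ ⟨x, hxFn n, rfl⟩
    linarith
  have hgwx : g w ≤ g x := by
    refine le_of_forall_pos_le_add fun δ hδ => ?_
    obtain ⟨n, hn⟩ := exists_pow_lt_of_lt_one hδ (by norm_num : (1/2 : ℝ) < 1)
    exact le_trans (hle n) (by linarith)
  nlinarith [dist_nonneg (x := x) (y := w)]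

set_option maxHeartbeats 1000000 in
/-- Sufficient condition for strict optimality: strict local minimality is equivalent to
strict local minimality relative to an identifiable set. -/
theorem strictLocalMin_iff_strictLocalMin_on_identifiable
    {X : Type*} [MetricSpace X] [CompleteSpace X]
    (f : X → EReal) (hlsc : LowerSemicontinuous f) (hbot : ∀ z, f z ≠ ⊥)
    (xbar : X) (hfin : f xbar ≠ ⊤) (hslope : slopeM f xbar = 0)
    (M : Set X) (hM : Identifiable f M xbar) :
    (∀ᶠ z in 𝓝[≠] xbar, f xbar < f z) ↔ (∀ᶠ z in 𝓝[M \ {xbar}] xbar, f xbar < f z) := by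
  constructor
  · intro h
    exact h.filter_mono (nhdsWithin_mono xbar (fun x hx => hx.2))
  intro hMin
  obtain ⟨hMcl, hxM, hmod⟩ := hM
  set r : ℝ := (f xbar).toReal with hr
  have hfr : f xbar = (r : EReal) := (EReal.coe_toReal hfin (hbot xbar)).symm
  -- extract a positive level `a` below the identifiability modulus
  set a : ℝ≥0∞ := min (identModulus f M xbar) 1 / 2 with ha
  have hmin_pos : 0 < min (identModulus f M xbar) 1 := lt_min hmod zero_lt_one
  have ha0 : 0 < a := ENNReal.half_pos hmin_pos.ne'
  have haT : a ≠ ⊤ := by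
    refine ne_top_of_le_ne_top (by norm_num : (1 : ℝ≥0∞) / 2 ≠ ⊤) ?_
    exact ENNReal.div_le_div_right (min_le_right _ _) 2
  have ha_lt : a < identModulus f M xbar :=
    lt_of_lt_of_le (ENNReal.half_lt_self hmin_pos.ne' (lt_of_le_of_lt (min_le_right _ _)
      ENNReal.one_lt_top).ne) (min_le_left _ _)
  have hev : ∀ᶠ x in (𝓝[Mᶜ] xbar ⊓ Filter.comap f (𝓝 (f xbar))), a < slopeM f x :=
    eventually_lt_of_lt_liminf ha_lt
  rw [Filter.eventually_inf] at hev
  obtain ⟨s, hs, t, ht, hst⟩ := hev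
  rw [Metric.mem_nhdsWithin_iff] at hs
  obtain ⟨ρ₁, hρ₁, hs⟩ := hs
  rw [Filter.mem_comap] at ht
  obtain ⟨W, hW, hWt⟩ := ht
  rw [hfr, EReal.nhds_coe, Filter.mem_map, Metric.mem_nhds_iff] at hW
  obtain ⟨δ, hδ, hWδ⟩ := hW
  have hident : ∀ x, x ∉ M → dist x xbar < ρ₁ → ∀ u : ℝ, f x = (u : EReal) →
      |u - r| < δ → a < slopeM f x := by
    intro x hxm hxd u hfu hud
    refine hst x ⟨hs ⟨Metric.mem_ball.2 hxd, hxm⟩, hWt ?_⟩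
    have : (u : EReal) ∈ W := hWδ (by simpa [Real.dist_eq] using hud)
    simpa [hfu] using this
  -- extract the radius for strict minimality on M
  rw [Filter.eventually_iff, Metric.mem_nhdsWithin_iff] at hMin
  obtain ⟨ρ₂, hρ₂, hMin⟩ := hMin
  -- the slope parameter
  set σ : ℝ := a.toReal / 3 with hσdef
  have hσ : 0 < σ := by
    have := ENNReal.toReal_pos ha0.ne' haT
    positivity
  -- extract the slope-zero radius for σ
  have hsz : ∃ ρ₃ > 0, ∀ x, dist x xbar < ρ₃ → f xbar ≤ f x + ((σ * dist x xbar : ℝ) : EReal) := by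
    rw [slopeM, if_neg hfin] at hslope
    have hlt : sInf {δ : ℝ≥0∞ | ∃ c : ℝ, 0 < c ∧ δ = ENNReal.ofReal c ∧
        ∀ᶠ z in 𝓝 xbar, f xbar ≤ f z + ((c * dist z xbar : ℝ) : EReal)} < ENNReal.ofReal σ := by
      rw [hslope]; exact ENNReal.ofReal_pos.2 hσ
    rw [sInf_lt_iff] at hlt
    obtain ⟨δ', ⟨c, hc, rfl, hevc⟩, hcσ⟩ := hlt
    have hcσ' : c < σ := (ENNReal.ofReal_lt_ofReal_iff hσ).1 hcσ
    have hevσ : ∀ᶠ x in 𝓝 xbar, f xbar ≤ f x + ((σ * dist x xbar : ℝ) : EReal) := by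
      filter_upwards [hevc] with x hx
      refine le_trans hx (add_le_add_right ?_ _)
      exact EReal.coe_le_coe_iff.2 (mul_le_mul_of_nonneg_right hcσ'.le dist_nonneg)
    rw [Metric.eventually_nhds_iff] at hevσ
    obtain ⟨ρ₃, hρ₃, h⟩ := hevσ
    exact ⟨ρ₃, hρ₃, fun x hx => h hx⟩
  obtain ⟨ρ₃, hρ₃, hsz⟩ := hsz
  -- now suppose for contradiction that xbar is not a strict local min
  by_contra hcon
  rw [Filter.not_eventually] at hcon
  have hcon' : ∃ᶠ z in 𝓝[≠] xbar, f z ≤ f xbar := by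
    exact hcon.mono (fun z hz => not_lt.1 hz)
  set ρ₀ : ℝ := min (min ρ₁ ρ₂) (min ρ₃ (δ / σ)) / 4 with hρ₀def
  have hρ₀ : 0 < ρ₀ := by
    have : 0 < δ / σ := by positivity
    have h1 : 0 < min (min ρ₁ ρ₂) (min ρ₃ (δ / σ)) := lt_min (lt_min hρ₁ hρ₂) (lt_min hρ₃ this)
    positivity
  have hball : ∀ᶠ u in 𝓝 xbar, dist u xbar < ρ₀ := by
    filter_upwards [Metric.ball_mem_nhds xbar hρ₀] with u hu
    exact Metric.mem_ball.1 hu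
  obtain ⟨z, ⟨hzle, hzball⟩, hzne⟩ :=
    ((hcon'.and_eventually (hball.filter_mono nhdsWithin_le_nhds)).and_eventually
      eventually_mem_nhdsWithin).exists
  have hzne' : z ≠ xbar := hzne
  set d : ℝ := dist z xbar with hd
  have hd0 : 0 < d := dist_pos.2 hzne'
  set t : ℝ := 2 * d with ht
  have htρ : d < ρ₀ := hzball
  have ht₁ : t < ρ₁ := by
    have : ρ₀ ≤ ρ₁ / 4 := by
      rw [hρ₀def]
      have : min (min ρ₁ ρ₂) (min ρ₃ (δ / σ)) ≤ ρ₁ := le_trans (min_le_left _ _) (min_le_left _ _)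
      linarith
    simp only [ht]; linarith
  have ht₂ : t < ρ₂ := by
    have : ρ₀ ≤ ρ₂ / 4 := by
      rw [hρ₀def]
      have : min (min ρ₁ ρ₂) (min ρ₃ (δ / σ)) ≤ ρ₂ := le_trans (min_le_left _ _) (min_le_right _ _)
      linarith
    simp only [ht]; linarith
  have ht₃ : t < ρ₃ := by
    have : ρ₀ ≤ ρ₃ / 4 := by
      rw [hρ₀def]
      have : min (min ρ₁ ρ₂) (min ρ₃ (δ / σ)) ≤ ρ₃ := le_trans (min_le_right _ _) (min_le_left _ _)
      linarith
    simp only [ht]; linarith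
  have htδ : σ * t < δ := by
    have h1 : ρ₀ ≤ (δ / σ) / 4 := by
      rw [hρ₀def]
      have : min (min ρ₁ ρ₂) (min ρ₃ (δ / σ)) ≤ δ / σ :=
        le_trans (min_le_right _ _) (min_le_right _ _)
      linarith
    have h2 : d < (δ / σ) / 4 := lt_of_lt_of_le htρ h1
    have h3 : σ * d < σ * ((δ / σ) / 4) := by nlinarith
    have h4 : σ * ((δ / σ) / 4) = δ / 4 := by field_simp
    simp only [ht]; nlinarith
  have ht0 : 0 < t := by simp only [ht]; linarith
  -- the clamped function
  set C : ℝ := r + 1 with hC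
  set b' : ℝ := r - σ * t with hb'
  set clampf : X → EReal := fun x => (f x ⊓ (C : EReal)) ⊔ (b' : EReal) with hclampf
  set g : X → ℝ := fun x => (clampf x).toReal with hgdef
  have hb'C : b' < C := by simp only [hb', hC]; nlinarith
  have hclamp_ne_top : ∀ x, clampf x ≠ ⊤ := by
    intro x
    have h1 : clampf x ≤ (max C b' : ℝ) := by
      refine sup_le (le_trans inf_le_right ?_) ?_
      · exact EReal.coe_le_coe_iff.2 (le_max_left _ _)
      · exact EReal.coe_le_coe_iff.2 (le_max_right _ _)
    exact ne_top_of_le_ne_top (EReal.coe_ne_top _) h1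
  have hclamp_ne_bot : ∀ x, clampf x ≠ ⊥ := by
    intro x
    exact ne_bot_of_le_ne_bot (EReal.coe_ne_bot _) le_sup_right
  have hclamp_eq : ∀ x, clampf x = ((g x : ℝ) : EReal) := by
    intro x
    exact (EReal.coe_toReal (hclamp_ne_top x) (hclamp_ne_bot x)).symm
  have hg_lb : ∀ x, b' ≤ g x := by
    intro x
    have : (b' : EReal) ≤ ((g x : ℝ) : EReal) := by rw [← hclamp_eq]; exact le_sup_right
    exact EReal.coe_le_coe_iff.1 this
  have hg_le_f : ∀ x, (b' : EReal) ≤ f x → ((g x : ℝ) : EReal) ≤ f x := by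
    intro x hx
    rw [← hclamp_eq]
    exact sup_le inf_le_left hx
  have hg_eq_f : ∀ x, (b' : EReal) ≤ f x → f x ≤ (C : EReal) → f x = ((g x : ℝ) : EReal) := by
    intro x h1 h2
    rw [← hclamp_eq, hclampf]
    simp only
    rw [inf_eq_left.2 h2, sup_eq_left.2 h1]
  have hg_lsc : LowerSemicontinuous g := by
    have hcl : LowerSemicontinuous clampf := by
      intro x b hb
      rcases lt_or_ge b ((b' : ℝ) : EReal) with h | h
      · filter_upwards [] with u
        exact lt_of_lt_of_le h le_sup_right
      · have hb2 : b < f x ⊓ (C : EReal) := by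
          rcases lt_sup_iff.1 hb with h1 | h1
          · exact h1
          · exact absurd h1 (not_lt.2 h)
        have hbf : b < f x := lt_of_lt_of_le hb2 inf_le_left
        have hbC : b < (C : EReal) := lt_of_lt_of_le hb2 inf_le_right
        filter_upwards [hlsc x b hbf] with u hu
        exact lt_of_lt_of_le (lt_inf_iff.2 ⟨hu, hbC⟩) le_sup_left
    intro x v hv
    have : ((v : ℝ) : EReal) < clampf x := by
      rw [hclamp_eq]; exact_mod_cast hv
    filter_upwards [hcl x _ this] with u hu
    rw [hclamp_eq] at hu
    exact_mod_cast hu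
  -- the complete space S
  set S : Set X := Metric.closedBall xbar t with hS
  have hfS : ∀ x ∈ S, (b' : EReal) ≤ f x := by
    intro x hx
    have hxd : dist x xbar ≤ t := Metric.mem_closedBall.1 hx
    have h1 : f xbar ≤ f x + ((σ * dist x xbar : ℝ) : EReal) := hsz x (lt_of_le_of_lt hxd ht₃)
    rcases eq_or_ne (f x) ⊤ with h | h
    · rw [h]; exact le_top
    · have hfx : f x = ((f x).toReal : EReal) := (EReal.coe_toReal h (hbot x)).symm
      rw [hfr, hfx, ← EReal.coe_add, EReal.coe_le_coe_iff] at h1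
      rw [hfx, EReal.coe_le_coe_iff, hb']
      nlinarith [dist_nonneg (x := x) (y := xbar), mul_le_mul_of_nonneg_left hxd hσ.le]
  have hfz_eq : f z = ((g z : ℝ) : EReal) := by
    refine hg_eq_f z (hfS z ?_) ?_
    · simp only [hS, Metric.mem_closedBall]; rw [ht]; linarith
    · refine le_trans (hzle.trans_eq hfr) (EReal.coe_le_coe_iff.2 ?_)
      simp only [hC]; linarith
  have hgz_le : g z ≤ r := by
    have : ((g z : ℝ) : EReal) ≤ (r : EReal) := by rw [← hfz_eq, ← hfr]; exact hzle
    exact EReal.coe_le_coe_iff.1 this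
  -- set up Ekeland on S
  haveI : CompleteSpace S := Metric.isClosed_closedBall.completeSpace_coe
  set gS : S → ℝ := fun u => g u with hgS
  have hgS_lsc : LowerSemicontinuous gS := hg_lsc.comp continuous_subtype_val
  have hzS : z ∈ S := by simp only [hS, Metric.mem_closedBall]; rw [ht]; linarith
  have hz_ek : ∀ u : S, gS ⟨z, hzS⟩ ≤ gS u + σ * t := by
    intro u
    have := hg_lb u
    simp only [hgS, hb'] at *
    linarith
  obtain ⟨y, hy1, hy2, hy3⟩ :=
    ekelandAux gS hgS_lsc b' (fun u => hg_lb u) ⟨z, hzS⟩ (σ * t) (3 * σ) (by linarith) hz_ek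
  set y₀ : X := (y : X) with hy₀
  have hyz : dist y₀ z ≤ 2 * d / 3 := by
    have : dist y ((⟨z, hzS⟩ : S)) = dist y₀ z := Subtype.dist_eq y ⟨z, hzS⟩
    rw [this] at hy2
    simp only [ht] at hy2
    nlinarith
  have hy_pos : 0 < dist y₀ xbar := by
    have h2 : d ≤ dist z y₀ + dist y₀ xbar := dist_triangle z y₀ xbar
    rw [dist_comm z y₀] at h2
    linarith [hyz, hd0]
  have hy_ne : y₀ ≠ xbar := dist_pos.1 hy_pos
  have hyx : dist y₀ xbar < t := by
    have h1 : dist y₀ xbar ≤ dist y₀ z + d := dist_triangle y₀ z xbar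
    rw [ht]; linarith [hyz, hd0]
  have hgy_le : g y₀ ≤ g z := hy1
  have hy₀S : y₀ ∈ S := y.2
  have hfy_eq : f y₀ = ((g y₀ : ℝ) : EReal) := by
    refine hg_eq_f y₀ (hfS y₀ hy₀S) ?_
    by_contra hCC
    push_neg at hCC
    have h1 : clampf y₀ = (C : EReal) := by
      rw [hclampf]
      simp only
      rw [inf_eq_right.2 hCC.le, sup_eq_left.2 (EReal.coe_le_coe_iff.2 hb'C.le)]
    have h2 : g y₀ = C := by
      simp only [hgdef, h1, EReal.toReal_coe]
    have : g y₀ ≤ r := le_trans hgy_le hgz_le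
    rw [h2] at this
    simp only [hC] at this
    linarith
  -- slope bound at y₀
  have hev_y : ∀ᶠ u in 𝓝 y₀, f y₀ ≤ f u + (((3 * σ) * dist u y₀ : ℝ) : EReal) := by
    have hball_mem : Metric.ball xbar t ∈ 𝓝 y₀ := Metric.isOpen_ball.mem_nhds hyx
    filter_upwards [hball_mem] with u hu
    have huS : u ∈ S := Metric.ball_subset_closedBall hu
    have h1 : g y₀ ≤ g u + (3 * σ) * dist u y₀ := by
      have := hy3 ⟨u, huS⟩
      rwa [Subtype.dist_eq] at this
    calc f y₀ = ((g y₀ : ℝ) : EReal) := hfy_eq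
      _ ≤ ((g u + (3 * σ) * dist u y₀ : ℝ) : EReal) := EReal.coe_le_coe_iff.2 h1
      _ = ((g u : ℝ) : EReal) + (((3 * σ) * dist u y₀ : ℝ) : EReal) := by
          rw [EReal.coe_add]
      _ ≤ f u + (((3 * σ) * dist u y₀ : ℝ) : EReal) :=
          add_le_add_left (hg_le_f u (hfS u huS)) _
  have hslope_y : slopeM f y₀ ≤ ENNReal.ofReal (3 * σ) := by
    rw [slopeM, if_neg (by rw [hfy_eq]; exact EReal.coe_ne_top _)]
    exact sInf_le ⟨3 * σ, by linarith, rfl, hev_y⟩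
  have h3σa : ENNReal.ofReal (3 * σ) = a := by
    have : 3 * σ = a.toReal := by rw [hσdef]; ring
    rw [this, ENNReal.ofReal_toReal haT]
  rw [h3σa] at hslope_y
  -- case analysis
  rcases Classical.em (y₀ ∈ M) with hyM | hyM
  · -- y₀ ∈ M : contradicts strict minimality on M
    have : f xbar < f y₀ := hMin ⟨Metric.mem_ball.2 (lt_trans hyx ht₂), hyM, hy_ne⟩
    rw [hfr, hfy_eq, EReal.coe_lt_coe_iff] at this
    have : g y₀ ≤ r := le_trans hgy_le hgz_le
    linarith
  · -- y₀ ∉ M : contradicts the slope lower bound from identifiability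
    have hwin : |g y₀ - r| < δ := by
      have h1 : g y₀ ≤ r := le_trans hgy_le hgz_le
      have h2 : b' ≤ g y₀ := hg_lb y₀
      rw [abs_lt]
      constructor
      · linarith [h2, htδ]
      · linarith
    have : a < slopeM f y₀ :=
      hident y₀ hyM (lt_trans hyx ht₁) (g y₀) hfy_eq hwin
    exact absurd hslope_y (not_le.2 this)
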